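/- Every capacitated valuation satisfies the gross substitutes condition: let G be a finite set of goods, w : G → ℝ nonnegative per-item values, c ∈ ℕ a capacity, and let v be the induced capacitated valuation. For any two price vectors p, q : G → ℝ with p j ≤ q j for every good j, and for any bundle S_p in the demand set D(p), there exists a bundle S_q in the demand set D(q) such that every good j ∈ S_p with p j = q j also belongs to S_q. -/

import Mathlib

/-- The capacitated valuation induced by per-item values `w` and capacity `c`:
the maximum, over subsets `T ⊆ S` with `|T| ≤ c`, of `∑ j ∈ T, w j`. -/
noncomputable def capVal {G : Type*} [DecidableEq G] (w : G → ℝ) (c : ℕ)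
    (S : Finset G) : ℝ :=
  (S.powerset.filter fun T => T.card ≤ c).sup' ⟨∅, by simp⟩ (fun T => ∑ j ∈ T, w j)

lemma sum_le_capVal {G : Type*} [DecidableEq G] (w : G → ℝ) (c : ℕ)
    {S T : Finset G} (hTS : T ⊆ S) (hTc : T.card ≤ c) :
    ∑ j ∈ T, w j ≤ capVal w c S := by
  unfold capVal
  exact Finset.le_sup' (fun T => ∑ j ∈ T, w j)
    (Finset.mem_filter.mpr ⟨Finset.mem_powerset.mpr hTS, hTc⟩)

lemma capVal_exists {G : Type*} [DecidableEq G] (w : G → ℝ) (c : ℕ) (S : Finset G) :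
    ∃ T, T ⊆ S ∧ T.card ≤ c ∧ capVal w c S = ∑ j ∈ T, w j := by
  obtain ⟨T, hT, h⟩ :=
    Finset.exists_mem_eq_sup' (⟨∅, by simp⟩ : (S.powerset.filter fun T => T.card ≤ c).Nonempty)
      (fun T => ∑ j ∈ T, w j)
  rw [Finset.mem_filter, Finset.mem_powerset] at hT
  exact ⟨T, hT.1, hT.2, h⟩

private lemma max_sub_self_eq (a : ℝ) : max a 0 - a = max (-a) 0 := by
  rcases le_total a 0 with h | h
  · rw [max_eq_right h, max_eq_left (by linarith)]; ring
  · rw [max_eq_left h, max_eq_right (by linarith)]; ring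

/-- Key lemma: if `T` is a feasible set of nonnegative-gain items maximizing total gain,
then `T ∪ {negative price items} ∪ E` (for any `E` of nonpositively priced items) is a
utility-maximizing bundle at prices `r`. -/
lemma capVal_demand_key {G : Type*} [Fintype G] [DecidableEq G]
    (w : G → ℝ) (c : ℕ) (r : G → ℝ) (T E : Finset G)
    (hTc : T.card ≤ c)
    (hE : ∀ j ∈ E, r j ≤ 0)
    (hTmax : ∀ T2 : Finset G, T2.card ≤ c →
      ∑ j ∈ T2, max (w j - max (r j) 0) 0 ≤ ∑ j ∈ T, (w j - max (r j) 0))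
    (S : Finset G) :
    capVal w c S - ∑ j ∈ S, r j ≤
      capVal w c (T ∪ Finset.univ.filter (fun j => r j < 0) ∪ E)
        - ∑ j ∈ T ∪ Finset.univ.filter (fun j => r j < 0) ∪ E, r j := by
  classical
  set N : Finset G := Finset.univ.filter (fun j => r j < 0) with hN
  obtain ⟨T0, hT0S, hT0c, hcap0⟩ := capVal_exists w c S
  have step1 : capVal w c S - ∑ j ∈ S, r j ≤
      ∑ j ∈ T, (w j - max (r j) 0) + ∑ j ∈ N, (-r j) := by
    have h1 : ∑ j ∈ T0, (w j - r j) ≤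
        ∑ j ∈ T0, (max (w j - max (r j) 0) 0 + max (-r j) 0) :=
      Finset.sum_le_sum fun j _ => by
        have ha := max_sub_self_eq (r j)
        have hb := le_max_left (w j - max (r j) 0) (0:ℝ)
        linarith
    rw [Finset.sum_add_distrib] at h1
    have h2 : ∑ j ∈ S \ T0, (-r j) ≤ ∑ j ∈ S \ T0, max (-r j) 0 :=
      Finset.sum_le_sum fun j _ => le_max_left _ _
    have h3 : ∑ j ∈ T0, max (-r j) 0 + ∑ j ∈ S \ T0, max (-r j) 0 ≤
        ∑ j : G, max (-r j) 0 := by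
      rw [add_comm, Finset.sum_sdiff hT0S]
      exact Finset.sum_le_sum_of_subset_of_nonneg (Finset.subset_univ S)
        (fun j _ _ => le_max_right _ _)
    have h4 : ∑ j ∈ N, (-r j) = ∑ j : G, max (-r j) 0 := by
      rw [hN, Finset.sum_filter]
      refine Finset.sum_congr rfl fun j _ => ?_
      rcases lt_or_ge (r j) 0 with h | h
      · rw [if_pos h, max_eq_left (by linarith)]
      · rw [if_neg (not_lt.mpr h), max_eq_right (by linarith)]
    have h5 := hTmax T0 hT0c
    have h6 : ∑ j ∈ S \ T0, r j + ∑ j ∈ T0, r j = ∑ j ∈ S, r j := Finset.sum_sdiff hT0S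
    have h7 : ∑ j ∈ T0, (w j - r j) = ∑ j ∈ T0, w j - ∑ j ∈ T0, r j :=
      Finset.sum_sub_distrib _ _
    have h8 : ∑ j ∈ S \ T0, (-r j) = -∑ j ∈ S \ T0, r j := Finset.sum_neg_distrib _
    rw [hcap0]
    linarith
  have step2 : ∑ j ∈ T, (w j - max (r j) 0) + ∑ j ∈ N, (-r j) ≤
      capVal w c (T ∪ N ∪ E) - ∑ j ∈ T ∪ N ∪ E, r j := by
    have hTsub : T ⊆ T ∪ N ∪ E :=
      (Finset.subset_union_left).trans Finset.subset_union_left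
    have hc : ∑ j ∈ T, w j ≤ capVal w c (T ∪ N ∪ E) := sum_le_capVal w c hTsub hTc
    have hs : ∑ j ∈ (T ∪ N ∪ E) \ T, r j + ∑ j ∈ T, r j = ∑ j ∈ T ∪ N ∪ E, r j :=
      Finset.sum_sdiff hTsub
    have h1 : ∑ j ∈ T, (max (r j) 0 - r j) = ∑ j ∈ T, max (-r j) 0 :=
      Finset.sum_congr rfl fun j _ => max_sub_self_eq (r j)
    have h5 : ∑ j ∈ N ∩ T, (-r j) ≤ ∑ j ∈ T, max (-r j) 0 :=
      le_trans (Finset.sum_le_sum fun j _ => le_max_left _ _)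
        (Finset.sum_le_sum_of_subset_of_nonneg Finset.inter_subset_right
          fun j _ _ => le_max_right _ _)
    have h6 : ∑ j ∈ N \ T, (-r j) ≤ ∑ j ∈ (T ∪ N ∪ E) \ T, (-r j) := by
      apply Finset.sum_le_sum_of_subset_of_nonneg
      · exact Finset.sdiff_subset_sdiff
          ((Finset.subset_union_right).trans Finset.subset_union_left) (Finset.Subset.refl _)
      · intro j hj _
        obtain ⟨hj1, hj2⟩ := Finset.mem_sdiff.mp hj
        rcases Finset.mem_union.mp hj1 with hj3 | hj3
        · rcases Finset.mem_union.mp hj3 with hj4 | hj4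
          · exact absurd hj4 hj2
          · have := (Finset.mem_filter.mp hj4).2
            linarith
        · have := hE j hj3
          linarith
    have h7 : ∑ j ∈ N ∩ T, (-r j) + ∑ j ∈ N \ T, (-r j) = ∑ j ∈ N, (-r j) :=
      Finset.sum_inter_add_sum_sdiff _ _ _
    have h8 : ∑ j ∈ (T ∪ N ∪ E) \ T, (-r j) = -∑ j ∈ (T ∪ N ∪ E) \ T, r j :=
      Finset.sum_neg_distrib _
    have h9 : ∑ j ∈ T, (w j - max (r j) 0) = ∑ j ∈ T, w j - ∑ j ∈ T, max (r j) 0 :=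
      Finset.sum_sub_distrib _ _
    have h10 : ∑ j ∈ T, (max (r j) 0 - r j) = ∑ j ∈ T, max (r j) 0 - ∑ j ∈ T, r j :=
      Finset.sum_sub_distrib _ _
    linarith
  exact le_trans step1 step2

/-- Every capacitated valuation satisfies the gross substitutes condition. -/
theorem capacitated_gross_substitutes {G : Type*} [Fintype G] [DecidableEq G]
    (w : G → ℝ) (hw : ∀ j, 0 ≤ w j) (c : ℕ)
    (p q : G → ℝ) (hpq : ∀ j, p j ≤ q j)
    (Sp : Finset G)
    (hSp : ∀ S : Finset G,
      capVal w c S - ∑ j ∈ S, p j ≤ capVal w c Sp - ∑ j ∈ Sp, p j) :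
    ∃ Sq : Finset G,
      (∀ S : Finset G,
        capVal w c S - ∑ j ∈ S, q j ≤ capVal w c Sq - ∑ j ∈ Sq, q j) ∧
      (∀ j ∈ Sp, p j = q j → j ∈ Sq) := by
  classical
  set gq : G → ℝ := fun j => w j - max (q j) 0 with hgq
  set A : Finset (Finset G) := Finset.univ.powerset.filter (fun T => T.card ≤ c) with hAdef
  have hA : A.Nonempty := ⟨∅, by simp [hAdef]⟩
  set Kp : Finset G := Sp.filter (fun j => p j = q j ∧ 0 < q j) with hKp
  set K0 : Finset G := Sp.filter (fun j => p j = q j ∧ q j ≤ 0) with hK0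
  obtain ⟨Tp, hTpS, hTpc, hTpcap⟩ := capVal_exists w c Sp
  -- every item of Kp is in Tp and has value at least its price
  have hb : ∀ j ∈ Kp, j ∈ Tp ∧ p j ≤ w j := by
    intro j hj
    rw [hKp, Finset.mem_filter] at hj
    obtain ⟨hjS, hpq', hq0⟩ := hj
    have hp0 : 0 < p j := by rw [hpq']; exact hq0
    have hbnd := hSp (Sp.erase j)
    rw [Finset.sum_erase_eq_sub hjS, hTpcap] at hbnd
    have hjTp : j ∈ Tp := by
      by_contra hjT
      have h := sum_le_capVal w c (Finset.subset_erase.mpr ⟨hTpS, hjT⟩) hTpc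
      linarith
    refine ⟨hjTp, ?_⟩
    have h1 : ∑ i ∈ Tp.erase j, w i ≤ capVal w c (Sp.erase j) :=
      sum_le_capVal w c (Finset.erase_subset_erase _ hTpS)
        (le_trans (Finset.card_le_card (Finset.erase_subset _ _)) hTpc)
    rw [Finset.sum_erase_eq_sub hjTp] at h1
    linarith
  have hKpTp : Kp ⊆ Tp := fun x hx => (hb x hx).1
  -- pick a maximizer Ts of total truncated gain, maximizing overlap with Kp
  set B : Finset (Finset G) :=
    A.filter (fun T => ∀ T2 ∈ A, ∑ j ∈ T2, max (gq j) 0 ≤ ∑ j ∈ T, max (gq j) 0) with hBdef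
  have hBne : B.Nonempty := by
    obtain ⟨T0, hT0, hT0e⟩ := Finset.exists_max_image A (fun T => ∑ j ∈ T, max (gq j) 0) hA
    exact ⟨T0, Finset.mem_filter.mpr ⟨hT0, hT0e⟩⟩
  obtain ⟨Ts, hTsB, hTsmax⟩ := Finset.exists_max_image B (fun T => (T ∩ Kp).card) hBne
  have hTsA : Ts ∈ A := (Finset.mem_filter.mp hTsB).1
  have hTsM : ∀ T2 ∈ A, ∑ j ∈ T2, max (gq j) 0 ≤ ∑ j ∈ Ts, max (gq j) 0 :=
    (Finset.mem_filter.mp hTsB).2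
  have hTsc : Ts.card ≤ c := (Finset.mem_filter.mp hTsA).2
  -- Kp ⊆ Ts
  have hKpTs : Kp ⊆ Ts := by
    intro j hj
    by_contra hjTs
    obtain ⟨hjTp, hwp⟩ := hb j hj
    have hjKp := hj
    rw [hKp, Finset.mem_filter] at hjKp
    obtain ⟨hjS, hpqj, hqj0⟩ := hjKp
    have hgqj : gq j = w j - p j := by
      rw [hgq]; simp only []
      rw [max_eq_left hqj0.le, hpqj]
    have hgqj0 : 0 ≤ gq j := by rw [hgqj]; linarith
    have hjTs' : j ∉ Ts ∩ Kp := fun h => hjTs (Finset.mem_inter.mp h).1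
    -- a helper to derive the final contradiction from a suitable new maximizer T'
    have contra : ∀ T' : Finset G, T' ∈ A →
        (∑ j ∈ Ts, max (gq j) 0 ≤ ∑ x ∈ T', max (gq x) 0) →
        insert j (Ts ∩ Kp) ⊆ T' ∩ Kp → False := by
      intro T' hT'A hT'sum hsub
      have hT'B : T' ∈ B := by
        refine Finset.mem_filter.mpr ⟨hT'A, fun T2 hT2 => le_trans (hTsM T2 hT2) hT'sum⟩
      have h1 := hTsmax T' hT'B
      have h2 := Finset.card_le_card hsub
      rw [Finset.card_insert_of_notMem hjTs'] at h2
      omega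
    rcases lt_or_eq_of_le hTsc with hlt | heqc
    · -- room to just insert j
      refine contra (insert j Ts) ?_ ?_ ?_
      · refine Finset.mem_filter.mpr ⟨Finset.mem_powerset.mpr (Finset.subset_univ _), ?_⟩
        calc (insert j Ts).card ≤ Ts.card + 1 := Finset.card_insert_le _ _
          _ ≤ c := hlt
      · rw [Finset.sum_insert hjTs]
        have := le_max_right (gq j) 0
        linarith
      · intro x hx
        rcases Finset.mem_insert.mp hx with rfl | hx
        · exact Finset.mem_inter.mpr ⟨Finset.mem_insert_self _ _, hj⟩
        · obtain ⟨hx1, hx2⟩ := Finset.mem_inter.mp hx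
          exact Finset.mem_inter.mpr ⟨Finset.mem_insert.mpr (Or.inr hx1), hx2⟩
    · -- Ts is full: find an element i of Ts \ Kp to swap out
      have hex : ∃ i ∈ Ts \ Kp, max (gq i) 0 ≤ max (gq j) 0 := by
        by_contra hno
        push_neg at hno
        -- all elements of Ts \ Kp have strictly larger gain; find one outside Tp
        have hsub : ¬ (Ts \ Kp ⊆ Tp) := by
          intro hss
          have h1 : (Ts ∩ Kp).card + (Ts \ Kp).card = Ts.card :=
            Finset.card_inter_add_card_sdiff Ts Kp
          have h3 : Ts \ Kp ⊆ Tp \ Kp := fun x hx =>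
            Finset.mem_sdiff.mpr ⟨hss hx, (Finset.mem_sdiff.mp hx).2⟩
          have h4 := Finset.card_le_card h3
          have h7 : (Tp \ Kp).card = Tp.card - Kp.card := Finset.card_sdiff_of_subset hKpTp
          have h6 := Finset.card_le_card hKpTp
          have h8 : (Ts ∩ Kp).card < Kp.card :=
            Finset.card_lt_card ((Finset.ssubset_iff_of_subset Finset.inter_subset_right).mpr
              ⟨j, hj, hjTs'⟩)
          omega
        obtain ⟨i, hiTsK, hiTp⟩ := Finset.not_subset.mp hsub
        have hiTs := (Finset.mem_sdiff.mp hiTsK).1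
        have hiKp := (Finset.mem_sdiff.mp hiTsK).2
        have hij : i ≠ j := fun h => hiKp (h ▸ hj)
        have hgt := hno i hiTsK
        -- key inequality : w j - p j < w i - max (p i) 0
        have hmaxj : max (gq j) 0 = w j - p j := by rw [max_eq_left hgqj0, hgqj]
        have hkey : w j - p j < w i - max (p i) 0 := by
          have h1 : w j - p j < max (gq i) 0 := by rw [← hmaxj]; exact hgt
          have h2 : 0 < max (gq i) 0 := lt_of_le_of_lt (by linarith [hgqj0, hgqj]) h1
          have h3 : max (gq i) 0 = gq i := by
            rcases le_total (gq i) 0 with h | h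
            · rw [max_eq_right h] at h2; linarith
            · exact max_eq_left h
          rw [h3] at h1
          have h4 : max (p i) 0 ≤ max (q i) 0 := max_le_max (hpq i) le_rfl
          rw [hgq] at h1
          simp only [] at h1
          linarith
        have hp0 : 0 < p j := by rw [hpqj]; exact hqj0
        -- now contradict p-optimality of Sp
        have hcardins : (insert i (Tp.erase j)).card ≤ c := by
          have h1 := Finset.card_insert_le i (Tp.erase j)
          have h2 := Finset.card_erase_of_mem hjTp
          have h3 := Finset.card_pos.mpr ⟨j, hjTp⟩
          omega
        have hiTpe : i ∉ Tp.erase j := fun h => hiTp (Finset.mem_erase.mp h).2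
        by_cases hiSp : i ∈ Sp
        · have hbnd := hSp (Sp.erase j)
          have hcap2 : ∑ x ∈ insert i (Tp.erase j), w x ≤ capVal w c (Sp.erase j) := by
            refine sum_le_capVal w c ?_ hcardins
            intro x hx
            rcases Finset.mem_insert.mp hx with rfl | hx
            · exact Finset.mem_erase.mpr ⟨hij, hiSp⟩
            · exact Finset.mem_erase.mpr
                ⟨(Finset.mem_erase.mp hx).1, hTpS (Finset.mem_erase.mp hx).2⟩
          rw [Finset.sum_insert hiTpe, Finset.sum_erase_eq_sub hjTp] at hcap2
          rw [Finset.sum_erase_eq_sub hjS, hTpcap] at hbnd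
          have hm := le_max_right (p i) (0:ℝ)
          linarith
        · have hbnd := hSp (insert i (Sp.erase j))
          have hiSpe : i ∉ Sp.erase j := fun h => hiSp (Finset.mem_erase.mp h).2
          have hcap2 : ∑ x ∈ insert i (Tp.erase j), w x ≤
              capVal w c (insert i (Sp.erase j)) := by
            refine sum_le_capVal w c ?_ hcardins
            intro x hx
            rcases Finset.mem_insert.mp hx with rfl | hx
            · exact Finset.mem_insert_self _ _
            · exact Finset.mem_insert.mpr (Or.inr (Finset.mem_erase.mpr
                ⟨(Finset.mem_erase.mp hx).1, hTpS (Finset.mem_erase.mp hx).2⟩))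
          rw [Finset.sum_insert hiTpe, Finset.sum_erase_eq_sub hjTp] at hcap2
          rw [Finset.sum_insert hiSpe, Finset.sum_erase_eq_sub hjS, hTpcap] at hbnd
          have hm := le_max_left (p i) (0:ℝ)
          linarith
      -- perform the swap
      obtain ⟨i, hiTsK, hile⟩ := hex
      have hiTs := (Finset.mem_sdiff.mp hiTsK).1
      have hiKp := (Finset.mem_sdiff.mp hiTsK).2
      have hjTse : j ∉ Ts.erase i := fun h => hjTs (Finset.mem_erase.mp h).2
      refine contra (insert j (Ts.erase i)) ?_ ?_ ?_
      · refine Finset.mem_filter.mpr ⟨Finset.mem_powerset.mpr (Finset.subset_univ _), ?_⟩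
        have h1 := Finset.card_insert_le j (Ts.erase i)
        have h2 := Finset.card_erase_of_mem hiTs
        have h3 := Finset.card_pos.mpr ⟨i, hiTs⟩
        omega
      · rw [Finset.sum_insert hjTse, Finset.sum_erase_eq_sub hiTs]
        linarith
      · intro x hx
        rcases Finset.mem_insert.mp hx with rfl | hx
        · exact Finset.mem_inter.mpr ⟨Finset.mem_insert_self _ _, hj⟩
        · obtain ⟨hx1, hx2⟩ := Finset.mem_inter.mp hx
          exact Finset.mem_inter.mpr ⟨Finset.mem_insert.mpr (Or.inr
            (Finset.mem_erase.mpr ⟨fun h => hiKp (h ▸ hx2), hx1⟩)), hx2⟩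
  -- assemble the demanded bundle at prices q
  set T1 : Finset G := Ts.filter (fun j => 0 ≤ gq j) with hT1
  have hT1c : T1.card ≤ c :=
    le_trans (Finset.card_le_card (Finset.filter_subset _ _)) hTsc
  have hT1sum : ∑ j ∈ T1, gq j = ∑ j ∈ Ts, max (gq j) 0 := by
    rw [hT1, Finset.sum_filter]
    refine Finset.sum_congr rfl fun j _ => ?_
    split_ifs with h
    · exact (max_eq_left h).symm
    · exact (max_eq_right (le_of_not_ge h)).symm
  refine ⟨T1 ∪ Finset.univ.filter (fun j => q j < 0) ∪ K0, ?_, ?_⟩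
  · intro S
    refine capVal_demand_key w c q T1 K0 hT1c ?_ ?_ S
    · intro j hj
      rw [hK0, Finset.mem_filter] at hj
      exact hj.2.2
    · intro T2 hT2c
      have h1 : ∑ j ∈ T2, max (gq j) 0 ≤ ∑ j ∈ Ts, max (gq j) 0 :=
        hTsM T2 (Finset.mem_filter.mpr ⟨Finset.mem_powerset.mpr (Finset.subset_univ _), hT2c⟩)
      have h2 : ∑ j ∈ T1, (w j - max (q j) 0) = ∑ j ∈ T1, gq j := by
        simp only [hgq]
      have h3 : ∑ j ∈ T2, max (w j - max (q j) 0) 0 = ∑ j ∈ T2, max (gq j) 0 := by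
        simp only [hgq]
      rw [h2, h3, hT1sum]
      exact h1
  · intro j hjS hpqj
    rcases le_or_gt (q j) 0 with hq0 | hq0
    · exact Finset.mem_union.mpr (Or.inr (Finset.mem_filter.mpr ⟨hjS, hpqj, hq0⟩))
    · have hjKp : j ∈ Kp := Finset.mem_filter.mpr ⟨hjS, hpqj, hq0⟩
      refine Finset.mem_union.mpr (Or.inl (Finset.mem_union.mpr (Or.inl ?_)))
      refine Finset.mem_filter.mpr ⟨hKpTs hjKp, ?_⟩
      have := (hb j hjKp).2
      rw [hgq]
      simp only []
      rw [max_eq_left hq0.le, ← hpqj]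
      linarith
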